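/- Let G be a non-constant multi-GGS group and let g ∈ G be directed along the ray 0̄ (i.e. g stabilises every vertex 0^n and all labels of g away from the vertices adjacent to the ray are trivial). Then g ∈ B. -/

import Mathlib

/-!  Automorphisms of the `p`-regular rooted tree `X*`, `X = {0, …, p-1} = ℤ/pℤ`, encoded by
their portraits: an automorphism is the collection of its labels `g|^v ∈ Sym(X)`, `v ∈ X*`. -/

/-- The automorphism group of the `p`-regular rooted tree, encoded via portraits. -/
def TreeAut (p : ℕ) := List (ZMod p) → Equiv.Perm (ZMod p)

instance {p : ℕ} : CoeFun (TreeAut p) (fun _ => List (ZMod p) → Equiv.Perm (ZMod p)) :=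
  ⟨fun g => g⟩

/-- The action of a portrait on the words of the tree. -/
def pact {p : ℕ} : TreeAut p → List (ZMod p) → List (ZMod p)
  | _, [] => []
  | L, x :: v => L [] x :: pact (fun w => L (x :: w)) v

/-- The inverse action of a portrait on the words of the tree. -/
def pactInv {p : ℕ} : TreeAut p → List (ZMod p) → List (ZMod p)
  | _, [] => []
  | L, y :: v => (L [])⁻¹ y :: pactInv (fun w => L ((L [])⁻¹ y :: w)) v

theorem pactInv_pact {p : ℕ} (L : TreeAut p) (v : List (ZMod p)) :
    pactInv L (pact L v) = v := by
  induction v generalizing L with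
  | nil => rfl
  | cons x v ih => simp [pact, pactInv]; exact ih _

theorem pact_pactInv {p : ℕ} (L : TreeAut p) (v : List (ZMod p)) :
    pact L (pactInv L v) = v := by
  induction v generalizing L with
  | nil => rfl
  | cons x v ih => simp [pact, pactInv]; exact ih _

theorem pact_one {p : ℕ} (v : List (ZMod p)) :
    pact (fun _ => 1 : TreeAut p) v = v := by
  induction v with
  | nil => rfl
  | cons x v ih => simpa [pact] using ih

theorem pact_mulP {p : ℕ} (L M : TreeAut p) (v : List (ZMod p)) :
    pact (fun u => L (pact M u) * M u) v = pact L (pact M v) := by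
  induction v generalizing L M with
  | nil => rfl
  | cons x v ih =>
    simp only [pact, Equiv.Perm.mul_apply]
    exact congrArg _ (ih (fun u => L ((M []) x :: u)) (fun w => M (x :: w)))

instance {p : ℕ} : One (TreeAut p) := ⟨fun _ => 1⟩
instance {p : ℕ} : Mul (TreeAut p) := ⟨fun L M => fun v => L (pact M v) * M v⟩
instance {p : ℕ} : Inv (TreeAut p) := ⟨fun L => fun v => (L (pactInv L v))⁻¹⟩

theorem TreeAut.mul_def {p : ℕ} (L M : TreeAut p) (v : List (ZMod p)) :
    (L * M) v = L (pact M v) * M v := rfl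
theorem TreeAut.one_def {p : ℕ} (v : List (ZMod p)) : (1 : TreeAut p) v = 1 := rfl
theorem TreeAut.inv_def {p : ℕ} (L : TreeAut p) (v : List (ZMod p)) :
    L⁻¹ v = (L (pactInv L v))⁻¹ := rfl

instance {p : ℕ} : Group (TreeAut p) where
  mul_assoc a b c := by
    funext v
    show (a * b) (pact c v) * c v = a (pact (b * c) v) * ((b * c) v)
    show a (pact b (pact c v)) * b (pact c v) * c v
        = a (pact (fun u => b (pact c u) * c u) v) * (b (pact c v) * c v)
    rw [pact_mulP, mul_assoc]
  one_mul a := by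
    funext v
    show (1 : TreeAut p) (pact a v) * a v = a v
    simp [TreeAut.one_def]
  mul_one a := by
    funext v
    show a (pact (fun _ => 1) v) * (1 : Equiv.Perm (ZMod p)) = a v
    rw [pact_one, mul_one]
  inv_mul_cancel a := by
    funext v
    show (a (pactInv a (pact a v)))⁻¹ * a v = (1 : TreeAut p) v
    rw [pactInv_pact, TreeAut.one_def, inv_mul_cancel]

/-- The rooted automorphism with label `σ` at the root and trivial labels elsewhere. -/
def rootedAut {p : ℕ} (σ : Equiv.Perm (ZMod p)) : TreeAut p :=
  fun v => if v = [] then σ else 1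

/-- The rooted automorphism `a` given by the `p`-cycle `σ = (0 1 … p-1)`, `x ↦ x + 1`. -/
def aAut (p : ℕ) : TreeAut p := rootedAut (Equiv.addRight (1 : ZMod p))

/-- The section `g|_x` of `g` at the first-layer vertex `x`. -/
def sect {p : ℕ} (g : TreeAut p) (x : ZMod p) : TreeAut p := fun v => g (x :: v)

/-- The `n`-th diagonal `κ_n(g) = ψ_n⁻¹(g, …, g)`. -/
def kappa {p : ℕ} (n : ℕ) (g : TreeAut p) : TreeAut p :=
  fun v => if n ≤ v.length then g (v.drop n) else 1

/-- `ψ_n⁻¹(g, 1, …, 1)`: the automorphism acting as `g` below the vertex `0^n` and trivially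
elsewhere. -/
def embAt {p : ℕ} (n : ℕ) (g : TreeAut p) : TreeAut p :=
  fun v => if List.replicate n (0 : ZMod p) <+: v then g (v.drop n) else 1

/-- The scalar product of two vectors in `𝔽_p^r`. -/
def dotp {p r : ℕ} (n m : Fin r → ZMod p) : ZMod p := ∑ j, n j * m j

/-- The directed generator `b^n` of the multi-GGS group with defining data
`e : ℤ/pℤ → 𝔽_p^r` (the columns of the matrix `E`, with `e 0 = 0`): it satisfies
`ψ_1(b^n) = (b^n, a^{n·e_1}, …, a^{n·e_{p-1}})`. -/
def bAut {p r : ℕ} (e : ZMod p → Fin r → ZMod p) (n : Fin r → ZMod p) : TreeAut p :=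
  fun v =>
    match v.getLast? with
    | none => 1
    | some i =>
      if ∀ x ∈ v.dropLast, x = 0 then Equiv.addRight (dotp n (e i)) else 1

/-- The multi-GGS group `G_E = ⟨A ∪ B⟩` associated to the data `e`. -/
def GGS {p r : ℕ} (e : ZMod p → Fin r → ZMod p) : Subgroup (TreeAut p) :=
  Subgroup.closure ({aAut p} ∪ Set.range (bAut e))

open scoped commutatorElement in
/-- The element `c̲ = ψ_1⁻¹([b^{s_1}, a], 1, …, 1)`. -/
def cAut {p r : ℕ} (e : ZMod p → Fin r → ZMod p) : TreeAut p :=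
  embAt 1 ⁅bAut e (fun j => if (j : ℕ) = 0 then 1 else 0), aAut p⁆

/-- The regularisation `G_reg = ⟨G ∪ {c̲}⟩` of a multi-GGS group. -/
def GGSreg {p r : ℕ} (e : ZMod p → Fin r → ZMod p) : Subgroup (TreeAut p) :=
  Subgroup.closure ({aAut p, cAut e} ∪ Set.range (bAut e))

/-- The word length on `Aut(X*)` with respect to the generating set `A ∪ B` of the multi-GGS
group determined by `e`. -/
noncomputable def ggsLength {p r : ℕ} (e : ZMod p → Fin r → ZMod p) (g : TreeAut p) : ℕ :=
  sInf {m | ∃ l : List (TreeAut p),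
    (∀ x ∈ l, x ∈ Subgroup.zpowers (aAut p) ∨ x ∈ Set.range (bAut e)) ∧
    l.length = m ∧ l.prod = g}

/-- `e` defines a *non-constant* multi-GGS group: the defining space `E` is not the line of
constant vectors. -/
def NonConstant {p r : ℕ} (e : ZMod p → Fin r → ZMod p) : Prop :=
  (∃ i j : ZMod p, i ≠ 0 ∧ j ≠ 0 ∧ e i ≠ e j) ∧
    LinearIndependent (ZMod p) (fun j : Fin r => fun i : ZMod p => e i j)

/-- `e` defines a *symmetric* GGS group: `r = 1`, the defining space is contained in the
symmetric subspace `{λ : λ_i = λ_{p-i}}`, and the group is non-constant. -/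
def IsSymmetricGGS {p r : ℕ} (e : ZMod p → Fin r → ZMod p) : Prop :=
  r = 1 ∧ (∀ (i : ZMod p) (j : Fin r), e i j = e (-i) j) ∧ NonConstant e

/-- `e` defines a *regular* multi-GGS group: non-constant and not symmetric. -/
def IsRegularGGS {p r : ℕ} (e : ZMod p → Fin r → ZMod p) : Prop :=
  NonConstant e ∧ ¬ IsSymmetricGGS e

namespace GGSAux

variable {p r : ℕ}

/-! ### Basic permutation lemmas -/

abbrev AR (c : ZMod p) : Equiv.Perm (ZMod p) := Equiv.addRight c

lemma AR_apply (c x : ZMod p) : AR c x = x + c := rfl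

lemma AR_zero : (AR 0 : Equiv.Perm (ZMod p)) = 1 := Equiv.ext fun x => add_zero x

lemma AR_add (a b : ZMod p) : AR a * AR b = AR (a + b) :=
  Equiv.ext fun x => by
    simp only [Equiv.Perm.mul_apply, AR_apply]
    rw [add_assoc, add_comm b a]

lemma AR_inv (a : ZMod p) : (AR a)⁻¹ = AR (-a) :=
  inv_eq_of_mul_eq_one_right (by rw [AR_add, add_neg_cancel, AR_zero])

lemma AR_eq_one {c : ZMod p} (h : (AR c : Equiv.Perm (ZMod p)) = 1) : c = 0 := by
  have := congrArg (fun f : Equiv.Perm (ZMod p) => f 0) h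
  simpa [AR_apply] using this

/-! ### basic TreeAut lemmas -/

lemma mul_apply (L M : TreeAut p) (v : List (ZMod p)) :
    (L * M) v = L (pact M v) * M v := rfl

lemma one_apply (v : List (ZMod p)) : (1 : TreeAut p) v = 1 := rfl

lemma pact_nil (L : TreeAut p) : pact L [] = [] := rfl

lemma pact_cons (L : TreeAut p) (x : ZMod p) (v : List (ZMod p)) :
    pact L (x :: v) = (L [] x) :: pact (sect L x) v := rfl

lemma sect_apply (L : TreeAut p) (x : ZMod p) (v : List (ZMod p)) :
    sect L x v = L (x :: v) := rfl

lemma root_mul (L M : TreeAut p) : (L * M) [] = L [] * M [] := rfl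

lemma sect_mul (L M : TreeAut p) (x : ZMod p) :
    sect (L * M) x = sect L (M [] x) * sect M x := rfl

lemma sect_one (x : ZMod p) : sect (1 : TreeAut p) x = 1 := rfl

lemma TreeAut.ext' {L M : TreeAut p} (h : ∀ v, L v = M v) : L = M := funext h

/-! ### rooted automorphisms -/

lemma rootedAut_nil (σ : Equiv.Perm (ZMod p)) : rootedAut σ [] = σ := rfl

lemma rootedAut_cons (σ : Equiv.Perm (ZMod p)) (x : ZMod p) (v : List (ZMod p)) :
    rootedAut σ (x :: v) = 1 := rfl

lemma sect_rootedAut (σ : Equiv.Perm (ZMod p)) (x : ZMod p) :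
    sect (rootedAut σ) x = 1 := rfl

def Aa (j : ZMod p) : TreeAut p := rootedAut (AR j)

lemma Aa_nil (j : ZMod p) : Aa j [] = AR j := rfl

lemma Aa_cons (j x : ZMod p) (v : List (ZMod p)) : Aa j (x :: v) = 1 := rfl

lemma sect_Aa (j x : ZMod p) : sect (Aa j) x = 1 := rfl

lemma Aa_zero : (Aa 0 : TreeAut p) = 1 := by
  funext v
  cases v with
  | nil => exact AR_zero
  | cons x w => rfl

lemma Aa_add (a b : ZMod p) : (Aa a : TreeAut p) * Aa b = Aa (a + b) := by
  funext v
  cases v with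
  | nil =>
    show Aa a (pact (Aa b) []) * AR b = AR (a + b)
    rw [pact_nil, Aa_nil, AR_add, add_comm]
  | cons x w =>
    show Aa a (pact (Aa b) (x :: w)) * (1 : Equiv.Perm (ZMod p)) = 1
    rw [pact_cons, Aa_cons, mul_one]

lemma Aa_inv (a : ZMod p) : (Aa a : TreeAut p)⁻¹ = Aa (-a) :=
  inv_eq_of_mul_eq_one_right (by rw [Aa_add, add_neg_cancel, Aa_zero])

lemma aAut_eq_Aa : aAut p = Aa 1 := rfl

end GGSAux
namespace GGSAux

variable {p r : ℕ}

/-! ### dotp lemmas -/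

lemma dotp_zero_left (m : Fin r → ZMod p) : dotp (0 : Fin r → ZMod p) m = 0 := by
  simp [dotp]

lemma dotp_zero_right (n : Fin r → ZMod p) : dotp n (0 : Fin r → ZMod p) = 0 := by
  simp [dotp]

lemma dotp_add_left (n n' m : Fin r → ZMod p) :
    dotp (n + n') m = dotp n m + dotp n' m := by
  simp [dotp, add_mul, Finset.sum_add_distrib]

lemma dotp_neg_left (n m : Fin r → ZMod p) : dotp (-n) m = -(dotp n m) := by
  simp [dotp]

/-! ### bAut lemmas -/

variable (e : ZMod p → Fin r → ZMod p)

lemma bAut_nil (n : Fin r → ZMod p) : bAut e n [] = 1 := rfl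

lemma bAut_single (n : Fin r → ZMod p) (x : ZMod p) :
    bAut e n [x] = AR (dotp n (e x)) := by
  simp [bAut]

lemma bAut_cons_cons (n : Fin r → ZMod p) (x y : ZMod p) (w : List (ZMod p)) :
    bAut e n (x :: y :: w) =
      if x = 0 then bAut e n (y :: w) else 1 := by
  simp only [bAut, List.getLast?_cons_cons]
  cases (y :: w).getLast? with
  | none => simp
  | some i =>
    by_cases hx : x = 0
    · subst hx; simp
    · simp [hx]

variable {e}

lemma bAut_zero_cons (he0 : e 0 = 0) (n : Fin r → ZMod p) (w : List (ZMod p)) :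
    bAut e n (0 :: w) = bAut e n w := by
  cases w with
  | nil => rw [bAut_single, bAut_nil, he0, dotp_zero_right, AR_zero]
  | cons y v => rw [bAut_cons_cons, if_pos rfl]

lemma sect_bAut_zero (he0 : e 0 = 0) (n : Fin r → ZMod p) :
    sect (bAut e n) 0 = bAut e n := by
  funext w; exact bAut_zero_cons he0 n w

lemma sect_bAut_ne (n : Fin r → ZMod p) {x : ZMod p} (hx : x ≠ 0) :
    sect (bAut e n) x = Aa (dotp n (e x)) := by
  funext w
  cases w with
  | nil => rw [sect_apply, bAut_single, Aa_nil]
  | cons y v => rw [sect_apply, bAut_cons_cons, if_neg hx, Aa_cons]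

lemma bAut_zero : bAut e (0 : Fin r → ZMod p) = 1 := by
  funext v
  show (match v.getLast? with
    | none => 1
    | some i => if ∀ x ∈ v.dropLast, x = (0:ZMod p) then AR (dotp 0 (e i)) else 1)
      = (1 : TreeAut p) v
  cases hv : v.getLast? with
  | none => rfl
  | some i =>
    show (if ∀ x ∈ v.dropLast, x = (0:ZMod p) then AR (dotp 0 (e i)) else 1) = 1
    rw [dotp_zero_left, AR_zero]; simp

lemma bAut_add (he0 : e 0 = 0) (n m : Fin r → ZMod p) :
    bAut e n * bAut e m = bAut e (n + m) := by
  funext v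
  induction v with
  | nil => show bAut e n (pact (bAut e m) []) * bAut e m [] = bAut e (n+m) []
           rw [pact_nil, bAut_nil, bAut_nil, bAut_nil, mul_one]
  | cons x w ih =>
    have hroot : bAut e m [] = 1 := bAut_nil e m
    have h1 : (bAut e n * bAut e m) (x :: w) =
        (sect (bAut e n) ((bAut e m []) x) * sect (bAut e m) x) w := rfl
    rw [h1, hroot]
    show (sect (bAut e n) x * sect (bAut e m) x) w = bAut e (n + m) (x :: w)
    by_cases hx : x = 0
    · subst hx
      rw [sect_bAut_zero he0, sect_bAut_zero he0, bAut_zero_cons he0]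
      exact ih
    · have h2 := congrFun (sect_bAut_ne (e := e) (n + m) hx) w
      rw [sect_apply] at h2
      rw [sect_bAut_ne n hx, sect_bAut_ne m hx, Aa_add, h2, dotp_add_left]

lemma bAut_inv (he0 : e 0 = 0) (n : Fin r → ZMod p) :
    (bAut e n)⁻¹ = bAut e (-n) :=
  inv_eq_of_mul_eq_one_right (by rw [bAut_add he0, add_neg_cancel, bAut_zero])

lemma bAut_eq_one_iff (hli : LinearIndependent (ZMod p)
    (fun j : Fin r => fun i : ZMod p => e i j)) {n : Fin r → ZMod p}
    (h : bAut e n = 1) : n = 0 := by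
  have hdz : ∀ i : ZMod p, dotp n (e i) = 0 := by
    intro i
    have := congrFun h [i]
    rw [bAut_single, one_apply] at this
    exact AR_eq_one this
  have := Fintype.linearIndependent_iff.mp hli n ?_
  · funext j; exact this j
  · funext i
    have : (∑ j : Fin r, n j • fun i : ZMod p => e i j) i = ∑ j : Fin r, n j * e i j := by
      simp
    rw [this]
    exact hdz i

end GGSAux
namespace GGSAux

variable {p r : ℕ} (e : ZMod p → Fin r → ZMod p)

/-! ### conjugated generators -/

def cnj (j : ZMod p) (n : Fin r → ZMod p) : TreeAut p := Aa j * bAut e n * Aa (-j)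

lemma cnj_nil (j : ZMod p) (n : Fin r → ZMod p) : cnj e j n [] = 1 := by
  show ((Aa j * bAut e n) * Aa (-j)) [] = 1
  rw [root_mul, root_mul, Aa_nil, Aa_nil, bAut_nil, mul_one, AR_add,
    add_neg_cancel, AR_zero]

lemma cnj_zero_left (n : Fin r → ZMod p) : cnj e 0 n = bAut e n := by
  rw [cnj, neg_zero, Aa_zero, one_mul, mul_one]

lemma cnj_zero_right (j : ZMod p) : cnj e j 0 = 1 := by
  rw [cnj, bAut_zero, mul_one, Aa_add, add_neg_cancel, Aa_zero]

variable {e}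

lemma sect_cnj (he0 : e 0 = 0) (j : ZMod p) (n : Fin r → ZMod p) (x : ZMod p) :
    sect (cnj e j n) x =
      if j = x then bAut e n else Aa (dotp n (e (x - j))) := by
  have h1 : sect (cnj e j n) x = sect (bAut e n) (x + -j) := by
    show sect ((Aa j * bAut e n) * Aa (-j)) x = _
    rw [sect_mul, sect_Aa, mul_one, Aa_nil, AR_apply, sect_mul, bAut_nil]
    show sect (Aa j) ((1 : Equiv.Perm (ZMod p)) (x + -j)) * sect (bAut e n) (x + -j) = _
    rw [sect_Aa, one_mul]
  rw [h1]
  by_cases hj : j = x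
  · subst hj
    rw [add_neg_cancel, sect_bAut_zero he0, if_pos rfl]
  · have hx : x + -j ≠ 0 := by
      intro h
      exact hj (by linear_combination -h)
    rw [sect_bAut_ne n hx, if_neg hj, sub_eq_add_neg]

lemma cnj_add (he0 : e 0 = 0) (j : ZMod p) (n m : Fin r → ZMod p) :
    cnj e j n * cnj e j m = cnj e j (n + m) := by
  have h2 : ∀ X : TreeAut p, Aa (-j) * (Aa j * X) = X := fun X => by
    rw [← mul_assoc, Aa_add, neg_add_cancel, Aa_zero, one_mul]
  show (Aa j * bAut e n * Aa (-j)) * (Aa j * bAut e m * Aa (-j)) = _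
  simp only [mul_assoc]
  rw [h2 (bAut e m * Aa (-j)), ← mul_assoc (bAut e n), bAut_add he0, cnj, mul_assoc]

lemma cnj_inv (he0 : e 0 = 0) (j : ZMod p) (n : Fin r → ZMod p) :
    (cnj e j n)⁻¹ = cnj e j (-n) :=
  inv_eq_of_mul_eq_one_right
    (by rw [cnj_add he0, add_neg_cancel, cnj_zero_right])

lemma Aa_mul_cnj (he0 : e 0 = 0) (t j : ZMod p) (n : Fin r → ZMod p) :
    Aa t * cnj e j n = cnj e (j + t) n * Aa t := by
  show Aa t * (Aa j * bAut e n * Aa (-j)) = (Aa (j+t) * bAut e n * Aa (-(j+t))) * Aa t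
  rw [mul_assoc (Aa (j+t) * bAut e n), Aa_add,
    show -(j + t) + t = -j by ring]
  rw [← mul_assoc (Aa t), ← mul_assoc (Aa t) (Aa j), Aa_add, add_comm t j]

/-! ### words of conjugated generators -/

variable (e)

def wordProd (l : List (ZMod p × (Fin r → ZMod p))) : TreeAut p :=
  (l.map (fun q => cnj e q.1 q.2)).prod

lemma wordProd_nil : wordProd e ([] : List (ZMod p × (Fin r → ZMod p))) = 1 := rfl

lemma wordProd_cons (q : ZMod p × (Fin r → ZMod p)) (l) :
    wordProd e (q :: l) = cnj e q.1 q.2 * wordProd e l := by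
  simp [wordProd]

lemma wordProd_append (l₁ l₂) :
    wordProd e (l₁ ++ l₂) = wordProd e l₁ * wordProd e l₂ := by
  simp [wordProd]

lemma wordProd_root (l) : wordProd e l [] = 1 := by
  induction l with
  | nil => rfl
  | cons q l ih => rw [wordProd_cons, root_mul, cnj_nil, one_mul, ih]

variable {e}

lemma Aa_mul_wordProd (he0 : e 0 = 0) (t : ZMod p) (l) :
    Aa t * wordProd e l = wordProd e (l.map fun q => (q.1 + t, q.2)) * Aa t := by
  induction l with
  | nil => rw [wordProd_nil, List.map_nil, wordProd_nil, one_mul, mul_one]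
  | cons q l ih =>
    rw [wordProd_cons, List.map_cons, wordProd_cons, ← mul_assoc, Aa_mul_cnj he0,
      mul_assoc, ih, ← mul_assoc]

lemma wordProd_inv (he0 : e 0 = 0) (l) :
    (wordProd e l)⁻¹ = wordProd e (l.reverse.map fun q => (q.1, -q.2)) := by
  induction l with
  | nil => rw [wordProd_nil, inv_one, List.reverse_nil, List.map_nil, wordProd_nil]
  | cons q l ih =>
    rw [wordProd_cons, mul_inv_rev, ih, List.reverse_cons, List.map_append,
      wordProd_append, List.map_singleton]
    have : wordProd e [((q.1, -q.2) : ZMod p × (Fin r → ZMod p))] = cnj e q.1 (-q.2) := by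
      rw [wordProd_cons, wordProd_nil, mul_one]
    rw [this, cnj_inv he0]

lemma wordProd_const (he0 : e 0 = 0) (d : ZMod p) (l)
    (h : ∀ q ∈ l, (q : ZMod p × (Fin r → ZMod p)).1 = d) :
    wordProd e l = cnj e d ((l.map Prod.snd).sum) := by
  induction l with
  | nil => rw [wordProd_nil, List.map_nil, List.sum_nil, cnj_zero_right]
  | cons q l ih =>
    rw [wordProd_cons, ih (fun q hq => h q (List.mem_cons_of_mem _ hq)),
      h q List.mem_cons_self, List.map_cons, List.sum_cons, cnj_add he0]

/-! ### mixed words -/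

variable (e)

def mixedElem (s : ZMod p ⊕ (Fin r → ZMod p)) : TreeAut p := Sum.elim Aa (bAut e) s

def mixedProd (w : List (ZMod p ⊕ (Fin r → ZMod p))) : TreeAut p :=
  (w.map (mixedElem e)).prod

lemma mixedElem_inl (t : ZMod p) : mixedElem e (Sum.inl t) = Aa t := rfl

lemma mixedElem_inr (n : Fin r → ZMod p) : mixedElem e (Sum.inr n) = bAut e n := rfl

lemma mixedProd_nil : mixedProd e [] = 1 := rfl

lemma mixedProd_cons (s w) :
    mixedProd e (s :: w) = mixedElem e s * mixedProd e w := by simp [mixedProd]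

lemma mixedProd_append (w₁ w₂) :
    mixedProd e (w₁ ++ w₂) = mixedProd e w₁ * mixedProd e w₂ := by simp [mixedProd]

/-- the section word of a conjugate word -/
def secw (x : ZMod p) (l : List (ZMod p × (Fin r → ZMod p))) :
    List (ZMod p ⊕ (Fin r → ZMod p)) :=
  l.map (fun q => if q.1 = x then Sum.inr q.2 else Sum.inl (dotp q.2 (e (x - q.1))))

variable {e}

lemma sect_wordProd (he0 : e 0 = 0) (x : ZMod p) (l) :
    sect (wordProd e l) x = mixedProd e (secw e x l) := by
  induction l with
  | nil => rw [wordProd_nil, secw, List.map_nil, mixedProd_nil, sect_one]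
  | cons q l ih =>
    rw [wordProd_cons, sect_mul, wordProd_root, secw, List.map_cons, mixedProd_cons]
    show sect (cnj e q.1 q.2) ((1 : Equiv.Perm (ZMod p)) x) * sect (wordProd e l) x = _
    rw [Equiv.Perm.one_apply, ih, sect_cnj he0]
    by_cases hq : q.1 = x
    · rw [if_pos hq, if_pos hq, mixedElem_inr]; rfl
    · rw [if_neg hq, if_neg hq, mixedElem_inl]; rfl

end GGSAux
namespace GGSAux

variable {p r : ℕ}

/-! ### converting mixed words to conjugate words -/

def toConj : List (ZMod p ⊕ (Fin r → ZMod p)) →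
    List (ZMod p × (Fin r → ZMod p)) × ZMod p
  | [] => ([], 0)
  | Sum.inl t :: w => ((toConj w).1.map (fun q => (q.1 + t, q.2)), t + (toConj w).2)
  | Sum.inr n :: w => ((0, n) :: (toConj w).1, (toConj w).2)

variable {e : ZMod p → Fin r → ZMod p}

lemma toConj_spec (he0 : e 0 = 0) (w : List (ZMod p ⊕ (Fin r → ZMod p))) :
    mixedProd e w = wordProd e (toConj w).1 * Aa (toConj w).2 := by
  induction w with
  | nil => rw [mixedProd_nil, toConj, wordProd_nil, one_mul, Aa_zero]
  | cons s w ih =>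
    cases s with
    | inl t =>
      rw [mixedProd_cons, mixedElem_inl, ih, toConj, ← mul_assoc,
        Aa_mul_wordProd he0, mul_assoc, Aa_add]
    | inr n =>
      rw [mixedProd_cons, mixedElem_inr, ih, toConj, wordProd_cons, ← mul_assoc,
        ← cnj_zero_left e n]

/-- total `B`-exponent of a mixed word -/
def mixedSum (w : List (ZMod p ⊕ (Fin r → ZMod p))) : Fin r → ZMod p :=
  (w.map (Sum.elim (fun _ => (0 : Fin r → ZMod p)) id)).sum

lemma toConj_sum (w : List (ZMod p ⊕ (Fin r → ZMod p))) :
    ((toConj w).1.map Prod.snd).sum = mixedSum (p := p) w := by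
  induction w with
  | nil => rfl
  | cons s w ih =>
    cases s with
    | inl t =>
      rw [toConj, mixedSum, List.map_cons, List.sum_cons, List.map_map]
      have : (Prod.snd ∘ fun q : ZMod p × (Fin r → ZMod p) => (q.1 + t, q.2))
          = Prod.snd := rfl
      rw [this, ih, Sum.elim_inl, zero_add, mixedSum]
    | inr n =>
      rw [toConj, mixedSum, List.map_cons, List.sum_cons, List.map_cons,
        List.sum_cons, ih, Sum.elim_inr, mixedSum]
      rfl

lemma toConj_length (w : List (ZMod p ⊕ (Fin r → ZMod p))) :
    (toConj w).1.length = w.countP (fun s => s.isRight) := by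
  induction w with
  | nil => rfl
  | cons s w ih =>
    cases s with
    | inl t =>
      rw [toConj, List.length_map, ih, List.countP_cons]
      simp
    | inr n =>
      rw [toConj, List.length_cons, ih, List.countP_cons]
      simp

/-! ### root label of mixed products -/

def inlSum (w : List (ZMod p ⊕ (Fin r → ZMod p))) : ZMod p :=
  (w.map (Sum.elim id (fun _ => (0 : ZMod p)))).sum

lemma mixedProd_root (e : ZMod p → Fin r → ZMod p)
    (w : List (ZMod p ⊕ (Fin r → ZMod p))) :
    mixedProd e w [] = AR (inlSum w) := by
  induction w with
  | nil => rw [mixedProd_nil, inlSum, List.map_nil, List.sum_nil, AR_zero]; rfl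
  | cons s w ih =>
    cases s with
    | inl t =>
      rw [mixedProd_cons, mixedElem_inl, root_mul, Aa_nil, ih, AR_add]
      simp [inlSum]
    | inr n =>
      rw [mixedProd_cons, mixedElem_inr, root_mul, bAut_nil, one_mul, ih]
      simp [inlSum]

/-! ### sums over section words -/

/-- the `B`-exponents of the letters of `l` at position `x` -/
def perX (x : ZMod p) (l : List (ZMod p × (Fin r → ZMod p))) : Fin r → ZMod p :=
  (l.map (fun q => if q.1 = x then q.2 else 0)).sum

lemma mixedSum_secw (e : ZMod p → Fin r → ZMod p) (x : ZMod p) (l) :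
    mixedSum (secw e x l) = perX x l := by
  induction l with
  | nil => rfl
  | cons q l ih =>
    rw [secw, List.map_cons, mixedSum, List.map_cons, List.sum_cons]
    show _ = perX x (q :: l)
    rw [perX, List.map_cons, List.sum_cons]
    by_cases hq : q.1 = x
    · rw [if_pos hq, if_pos hq, Sum.elim_inr]
      exact congrArg _ ih
    · rw [if_neg hq, if_neg hq, Sum.elim_inl]
      exact congrArg _ ih

lemma inlSum_secw (he0 : e 0 = 0) (x : ZMod p) (l) :
    inlSum (secw e x l) = (l.map (fun q => dotp q.2 (e (x - q.1)))).sum := by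
  induction l with
  | nil => rfl
  | cons q l ih =>
    rw [secw, List.map_cons, inlSum, List.map_cons, List.sum_cons, List.map_cons,
      List.sum_cons]
    by_cases hq : q.1 = x
    · rw [if_pos hq, Sum.elim_inr, hq, sub_self, he0, dotp_zero_right, zero_add,
        zero_add]
      exact ih
    · rw [if_neg hq, Sum.elim_inl]
      exact congrArg _ ih

lemma secw_length (e : ZMod p → Fin r → ZMod p) (x : ZMod p) (l) :
    (secw e x l).countP (fun s => s.isRight) = l.countP (fun q => q.1 = x) := by
  rw [secw, List.countP_map]
  apply List.countP_congr
  intro q _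
  by_cases hq : q.1 = x <;> simp [hq]

end GGSAux
namespace GGSAux

variable {p r : ℕ}

lemma countP_lt_length {α : Type*} (pb : α → Bool) (l : List α)
    (h : ∃ a ∈ l, ¬ pb a) : l.countP pb < l.length := by
  induction l with
  | nil => obtain ⟨a, ha, _⟩ := h; exact absurd ha List.not_mem_nil
  | cons a l ih =>
    rw [List.countP_cons, List.length_cons]
    obtain ⟨b, hb, hpb⟩ := h
    rcases List.mem_cons.mp hb with hb | hb
    · subst hb
      have : (pb b : Bool) = false := by simpa using hpb
      rw [this]
      simpa using Nat.lt_succ_of_le (show l.countP pb ≤ l.length from List.countP_le_length)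
    · have := ih ⟨b, hb, hpb⟩
      split <;> omega

lemma sum_perX [NeZero p] (l : List (ZMod p × (Fin r → ZMod p))) :
    (l.map Prod.snd).sum = ∑ x : ZMod p, perX x l := by
  induction l with
  | nil => simp [perX]
  | cons q l ih =>
    have hpx : ∀ x, perX x (q :: l) = (if q.1 = x then q.2 else 0) + perX x l := by
      intro x; rw [perX, List.map_cons, List.sum_cons]; rfl
    rw [List.map_cons, List.sum_cons, ih]
    simp only [hpx]
    rw [Finset.sum_add_distrib, Finset.sum_ite_eq Finset.univ q.1 (fun _ => q.2),
      if_pos (Finset.mem_univ _)]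

variable {e : ZMod p → Fin r → ZMod p}

/-- If a word in the conjugated generators represents the identity, its total
`B`-exponent is zero. -/
lemma lemmaB [NeZero p] (he0 : e 0 = 0)
    (hli : LinearIndependent (ZMod p) (fun j : Fin r => fun i : ZMod p => e i j)) :
    ∀ (c : ℕ) (l : List (ZMod p × (Fin r → ZMod p))), l.length ≤ c →
      wordProd e l = 1 → (l.map Prod.snd).sum = 0 := by
  intro c
  induction c with
  | zero =>
    intro l hl _
    rw [List.length_eq_zero_iff.mp (Nat.le_zero.mp hl)]
    rfl
  | succ c IH =>
    intro l hl hprod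
    cases l with
    | nil => rfl
    | cons q ls =>
      by_cases hall : ∀ q' ∈ q :: ls, (q' : ZMod p × (Fin r → ZMod p)).1 = q.1
      · have hcnj : cnj e q.1 (((q :: ls).map Prod.snd).sum) = 1 := by
          rw [← wordProd_const he0 q.1 _ hall, hprod]
        set S := ((q :: ls).map Prod.snd).sum with hS
        have e1 : (Aa (-q.1) : TreeAut p) * Aa q.1 = 1 := by
          rw [Aa_add, neg_add_cancel, Aa_zero]
        have hb : bAut e S = 1 := by
          calc bAut e S = (Aa (-q.1) * Aa q.1) * bAut e S * (Aa (-q.1) * Aa q.1) := by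
                rw [e1, one_mul, mul_one]
            _ = Aa (-q.1) * (Aa q.1 * bAut e S * Aa (-q.1)) * Aa q.1 := by
                simp only [mul_assoc]
            _ = Aa (-q.1) * cnj e q.1 S * Aa q.1 := rfl
            _ = 1 := by rw [hcnj, mul_one, e1]
        exact bAut_eq_one_iff hli hb
      · push_neg at hall
        obtain ⟨q1, hq1mem, hq1ne⟩ := hall
        have hwit : ∀ x : ZMod p, ∃ q' ∈ q :: ls, (q' : ZMod p × (Fin r → ZMod p)).1 ≠ x := by
          intro x
          by_cases hx : x = q.1
          · exact ⟨q1, hq1mem, by rw [hx]; exact hq1ne⟩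
          · exact ⟨q, List.mem_cons_self, fun h => hx h.symm⟩
        have key : ∀ x : ZMod p, perX x (q :: ls) = 0 := by
          intro x
          have hsect : mixedProd e (secw e x (q :: ls)) = 1 := by
            rw [← sect_wordProd he0, hprod, sect_one]
          set w := secw e x (q :: ls) with hw
          have hspec := toConj_spec he0 w
          rw [hsect] at hspec
          have hJ : (toConj w).2 = 0 := by
            have h2 := congrFun hspec []
            rw [one_apply, root_mul, wordProd_root, one_mul, Aa_nil] at h2
            exact AR_eq_one h2.symm
          have hW : wordProd e (toConj w).1 = 1 := by
            rw [hJ, Aa_zero, mul_one] at hspec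
            exact hspec.symm
          have hlen : (toConj w).1.length ≤ c := by
            rw [toConj_length, hw, secw_length]
            have hlt : (q :: ls).countP (fun q' => decide (q'.1 = x)) < (q :: ls).length := by
              apply countP_lt_length
              obtain ⟨q', hmem, hne⟩ := hwit x
              exact ⟨q', hmem, by simpa using hne⟩
            rw [List.length_cons] at hlt hl
            omega
          have hsum := IH (toConj w).1 hlen hW
          rw [toConj_sum, mixedSum_secw] at hsum
          exact hsum
        rw [sum_perX]
        simp [key]

end GGSAux
namespace GGSAux

variable {p r : ℕ}

/-! ### the subgroup of automorphisms all of whose labels are rotations -/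

def Saff (p : ℕ) : Subgroup (TreeAut p) where
  carrier := {g | ∀ v, ∃ c, g v = AR c}
  one_mem' := fun v => ⟨0, by rw [AR_zero]; rfl⟩
  mul_mem' := by
    intro L M hL hM v
    obtain ⟨c, hc⟩ := hL (pact M v)
    obtain ⟨c', hc'⟩ := hM v
    exact ⟨c' + c, by rw [mul_apply, hc, hc', AR_add, add_comm]⟩
  inv_mem' := by
    intro L hL v
    obtain ⟨c, hc⟩ := hL (pactInv L v)
    exact ⟨-c, by rw [TreeAut.inv_def, hc, AR_inv]⟩

lemma GGS_le_Saff (e : ZMod p → Fin r → ZMod p) : GGS e ≤ Saff p := by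
  apply (Subgroup.closure_le _).mpr
  rintro g (hg | ⟨n, rfl⟩)
  · rw [Set.mem_singleton_iff.mp hg]
    intro v
    cases v with
    | nil => exact ⟨1, rfl⟩
    | cons x w => exact ⟨0, by rw [AR_zero]; rfl⟩
  · intro v
    show ∃ c, (match v.getLast? with
      | none => 1
      | some i => if ∀ x ∈ v.dropLast, x = (0 : ZMod p)
          then Equiv.addRight (dotp n (e i)) else 1) = AR c
    cases v.getLast? with
    | none => exact ⟨0, by rw [AR_zero]⟩
    | some i =>
      by_cases hv : ∀ x ∈ v.dropLast, x = (0 : ZMod p)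
      · exact ⟨dotp n (e i), by
          show (if ∀ x ∈ v.dropLast, x = (0:ZMod p)
            then Equiv.addRight (dotp n (e i)) else 1) = AR (dotp n (e i))
          rw [if_pos hv]⟩
      · exact ⟨0, by
          show (if ∀ x ∈ v.dropLast, x = (0:ZMod p)
            then Equiv.addRight (dotp n (e i)) else 1) = AR 0
          rw [if_neg hv, AR_zero]⟩

/-! ### labels along the ray are trivial -/

lemma root_eq_one {g : TreeAut p} (hS : ∀ v, ∃ c, g v = AR c)
    (hfix : ∀ m : ℕ, pact g (List.replicate m (0 : ZMod p)) = List.replicate m 0) :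
    g [] = 1 := by
  obtain ⟨c, hc⟩ := hS []
  have h1 := hfix 1
  rw [List.replicate_one, pact_cons, pact_nil] at h1
  have h2 : g [] 0 = 0 := (List.cons_eq_cons.mp h1).1
  rw [hc, AR_apply, zero_add] at h2
  rw [hc, h2, AR_zero]

lemma hfix_sect {g : TreeAut p} (hroot : g [] = 1)
    (hfix : ∀ m : ℕ, pact g (List.replicate m (0 : ZMod p)) = List.replicate m 0) :
    ∀ m : ℕ, pact (sect g 0) (List.replicate m (0 : ZMod p)) = List.replicate m 0 := by
  intro m
  have h := hfix (m + 1)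
  rw [List.replicate_succ, pact_cons, hroot] at h
  have h0 : (1 : Equiv.Perm (ZMod p)) 0 = (0 : ZMod p) := rfl
  rw [h0] at h
  exact (List.cons_eq_cons.mp h).2

lemma ray_label_one {g : TreeAut p} (hS : ∀ v, ∃ c, g v = AR c)
    (hfix : ∀ m : ℕ, pact g (List.replicate m (0 : ZMod p)) = List.replicate m 0) :
    ∀ k : ℕ, g (List.replicate k (0 : ZMod p)) = 1 := by
  intro k
  induction k generalizing g with
  | zero => exact root_eq_one hS hfix
  | succ k ih =>
    rw [List.replicate_succ]
    exact ih (g := sect g 0) (fun v => hS (0 :: v))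
      (hfix_sect (root_eq_one hS hfix) hfix)

/-! ### every element of the multi-GGS group is represented by a word -/

lemma exists_rep {e : ZMod p → Fin r → ZMod p} (he0 : e 0 = 0) {g : TreeAut p}
    (hg : g ∈ GGS e) : ∃ l J, g = wordProd e l * Aa J := by
  refine Subgroup.closure_induction ?_ ?_ ?_ ?_ hg
  · rintro x (hx | ⟨n, rfl⟩)
    · exact ⟨[], 1, by rw [wordProd_nil, one_mul, Set.mem_singleton_iff.mp hx, aAut_eq_Aa]⟩
    · exact ⟨[(0, n)], 0, by
        rw [Aa_zero, mul_one, wordProd_cons, wordProd_nil, mul_one, cnj_zero_left]⟩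
  · exact ⟨[], 0, by rw [wordProd_nil, Aa_zero, mul_one]⟩
  · rintro a b _ _ ⟨l₁, J₁, rfl⟩ ⟨l₂, J₂, rfl⟩
    refine ⟨l₁ ++ l₂.map (fun q => (q.1 + J₁, q.2)), J₁ + J₂, ?_⟩
    rw [wordProd_append, ← Aa_add]
    simp only [mul_assoc]
    congr 1
    rw [← mul_assoc, Aa_mul_wordProd he0, mul_assoc]
  · rintro a _ ⟨l, J, rfl⟩
    refine ⟨(l.reverse.map fun q => (q.1, -q.2)).map (fun q => (q.1 + -J, q.2)), -J, ?_⟩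
    rw [mul_inv_rev, wordProd_inv he0, Aa_inv, Aa_mul_wordProd he0]

end GGSAux
namespace GGSAux

variable {p r : ℕ} {e : ZMod p → Fin r → ZMod p}

lemma eq_zero_of_dotp (hli : LinearIndependent (ZMod p)
    (fun j : Fin r => fun i : ZMod p => e i j)) {n : Fin r → ZMod p}
    (hdz : ∀ i : ZMod p, dotp n (e i) = 0) : n = 0 := by
  have := Fintype.linearIndependent_iff.mp hli n ?_
  · funext j; exact this j
  · funext i
    have h1 : (∑ j : Fin r, n j • fun i : ZMod p => e i j) i = ∑ j : Fin r, n j * e i j := by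
      simp
    rw [h1]
    exact hdz i

lemma mixedSum_append (w₁ w₂ : List (ZMod p ⊕ (Fin r → ZMod p))) :
    mixedSum (p := p) (r := r) (w₁ ++ w₂) = mixedSum w₁ + mixedSum w₂ := by
  simp [mixedSum]

lemma sum_dotp_group [NeZero p] (x : ZMod p) (l : List (ZMod p × (Fin r → ZMod p))) :
    (l.map (fun q => dotp q.2 (e (x - q.1)))).sum
      = ∑ d : ZMod p, dotp (perX d l) (e (x - d)) := by
  induction l with
  | nil => simp [perX, dotp_zero_left]
  | cons q l ih =>
    have hpx : ∀ d, perX d (q :: l) = (if q.1 = d then q.2 else 0) + perX d l := by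
      intro d; rw [perX, List.map_cons, List.sum_cons]; rfl
    rw [List.map_cons, List.sum_cons, ih]
    simp only [hpx, dotp_add_left]
    rw [Finset.sum_add_distrib]
    congr 1
    have h2 : ∀ d : ZMod p, dotp (if q.1 = d then q.2 else 0) (e (x - d))
        = if q.1 = d then dotp q.2 (e (x - d)) else 0 := by
      intro d; split
      · rfl
      · exact dotp_zero_left _
    simp only [h2]
    rw [Finset.sum_ite_eq Finset.univ q.1 (fun d => dotp q.2 (e (x - d))),
      if_pos (Finset.mem_univ _)]

end GGSAux
namespace GGSAux

variable {p r : ℕ} {e : ZMod p → Fin r → ZMod p}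

lemma bAut_eq_one_of_dotp (he0 : e 0 = 0) {n : Fin r → ZMod p}
    (hdz : ∀ i : ZMod p, dotp n (e i) = 0) : bAut e n = 1 := by
  funext v
  show (match v.getLast? with
    | none => 1
    | some i => if ∀ x ∈ v.dropLast, x = (0:ZMod p)
        then Equiv.addRight (dotp n (e i)) else 1) = (1 : TreeAut p) v
  cases v.getLast? with
  | none => rfl
  | some i =>
    show (if ∀ x ∈ v.dropLast, x = (0:ZMod p)
        then Equiv.addRight (dotp n (e i)) else 1) = 1
    rw [hdz i, show Equiv.addRight (0 : ZMod p) = 1 from AR_zero]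
    simp

lemma mainT [NeZero p] (he0 : e 0 = 0)
    (hli : LinearIndependent (ZMod p) (fun j : Fin r => fun i : ZMod p => e i j)) :
    ∀ (c : ℕ) (g : TreeAut p) (l : List (ZMod p × (Fin r → ZMod p))) (J : ZMod p),
      l.length ≤ c → g = wordProd e l * Aa J →
      (∀ v, ∃ c', g v = AR c') →
      (∀ m : ℕ, pact g (List.replicate m (0 : ZMod p)) = List.replicate m 0) →
      (∀ v : List (ZMod p),
        (∀ (k : ℕ) (i : ZMod p), v ≠ List.replicate k (0 : ZMod p) ++ [i]) →
        (∀ k : ℕ, v ≠ List.replicate k (0 : ZMod p)) → g v = 1) →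
      ∃ n : Fin r → ZMod p, g = bAut e n := by
  intro c
  induction c with
  | zero =>
    intro g l J hlen hrep hS hfix _
    rw [List.length_eq_zero_iff.mp (Nat.le_zero.mp hlen)] at hrep
    rw [wordProd_nil, one_mul] at hrep
    have hroot : g [] = 1 := root_eq_one hS hfix
    have hJ : J = 0 := by
      rw [hrep] at hroot
      exact AR_eq_one hroot
    exact ⟨0, by rw [hrep, hJ, Aa_zero, bAut_zero]⟩
  | succ c IH =>
    intro g l J hlen hrep hS hfix hdir
    have hroot : g [] = 1 := root_eq_one hS hfix
    have hJ : J = 0 := by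
      have h1 : g [] = AR J := by
        rw [hrep, root_mul, wordProd_root, one_mul, Aa_nil]
      rw [hroot] at h1
      exact AR_eq_one h1.symm
    have hrep' : g = wordProd e l := by rw [hrep, hJ, Aa_zero, mul_one]
    cases l with
    | nil => exact ⟨0, by rw [hrep', wordProd_nil, bAut_zero]⟩
    | cons q ls =>
      by_cases hall : ∀ q' ∈ q :: ls, (q' : ZMod p × (Fin r → ZMod p)).1 = q.1
      · -- all letters at the same spine position
        set S := ((q :: ls).map Prod.snd).sum with hSdef
        have hg : g = cnj e q.1 S := by rw [hrep', wordProd_const he0 q.1 _ hall]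
        by_cases hd : q.1 = 0
        · exact ⟨S, by rw [hg, hd, cnj_zero_left]⟩
        · have hlb : ∀ i : ZMod p, dotp S (e i) = 0 := by
            intro i
            have h2 : sect g q.1 = bAut e S := by
              rw [hg, sect_cnj he0, if_pos (rfl : q.1 = q.1)]
            have h3 : g [q.1, i] = AR (dotp S (e i)) := by
              show sect g q.1 [i] = _
              rw [h2, bAut_single]
            have h1 : g [q.1, i] = 1 := by
              apply hdir
              · intro k i' hk
                have hl2 := congrArg List.length hk
                simp only [List.length_cons, List.length_nil, List.length_append,
                  List.length_replicate] at hl2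
                have hk1 : k = 1 := by omega
                subst hk1
                rw [List.replicate_one] at hk
                exact hd (List.cons_eq_cons.mp hk).1
              · intro k hk
                have hl2 := congrArg List.length hk
                simp only [List.length_cons, List.length_nil,
                  List.length_replicate] at hl2
                have hk1 : k = 2 := by omega
                subst hk1
                simp only [List.replicate, List.cons_eq_cons] at hk
                exact hd hk.1
            rw [h1] at h3
            exact AR_eq_one h3.symm
          have hS0 : S = 0 := eq_zero_of_dotp hli hlb
          exact ⟨0, by rw [hg, hS0, cnj_zero_right, bAut_zero]⟩
      · -- letters at two different spine positions
        push_neg at hall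
        obtain ⟨q1, hq1mem, hq1ne⟩ := hall
        have hwit : ∀ x : ZMod p, ∃ q' ∈ q :: ls,
            (q' : ZMod p × (Fin r → ZMod p)).1 ≠ x := by
          intro x
          by_cases hx : x = q.1
          · exact ⟨q1, hq1mem, by rw [hx]; exact hq1ne⟩
          · exact ⟨q, List.mem_cons_self, fun h => hx h.symm⟩
        have hsw : ∀ x : ZMod p, sect g x = mixedProd e (secw e x (q :: ls)) := by
          intro x; rw [hrep', sect_wordProd he0]
        have hcount : ∀ x : ZMod p,
            (q :: ls).countP (fun q' => decide (q'.1 = x)) ≤ c := by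
          intro x
          have hlt : (q :: ls).countP (fun q' => decide (q'.1 = x)) < (q :: ls).length := by
            apply countP_lt_length
            obtain ⟨q', hmem, hne⟩ := hwit x
            exact ⟨q', hmem, by simpa using hne⟩
          rw [List.length_cons] at hlt hlen
          omega
        -- the section at 0 is again directed, with a shorter word
        have hfix0 := hfix_sect hroot hfix
        have hS0 : ∀ v, ∃ c', sect g 0 v = AR c' := fun v => hS (0 :: v)
        have hdir0 : ∀ v : List (ZMod p),
            (∀ (k : ℕ) (i : ZMod p), v ≠ List.replicate k (0 : ZMod p) ++ [i]) →
            (∀ k : ℕ, v ≠ List.replicate k (0 : ZMod p)) → sect g 0 v = 1 := by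
          intro v h1 h2
          apply hdir (0 :: v)
          · intro k i hk
            cases k with
            | zero =>
              rw [List.replicate_zero, List.nil_append] at hk
              obtain ⟨h3, h4⟩ := List.cons_eq_cons.mp hk
              exact h2 0 h4
            | succ k' =>
              rw [List.replicate_succ, List.cons_append] at hk
              exact h1 k' i (List.cons_eq_cons.mp hk).2
          · intro k hk
            cases k with
            | zero => exact List.cons_ne_nil _ _ hk
            | succ k' =>
              rw [List.replicate_succ] at hk
              exact h2 k' (List.cons_eq_cons.mp hk).2
        obtain ⟨m, hm⟩ : ∃ n, sect g 0 = bAut e n := by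
          apply IH (sect g 0) (toConj (secw e 0 (q :: ls))).1 (toConj (secw e 0 (q :: ls))).2
            ?_ ?_ hS0 hfix0 hdir0
          · rw [toConj_length, secw_length]
            exact hcount 0
          · rw [hsw 0, toConj_spec he0]
        -- the B-exponents at nonzero spine positions vanish
        have hperx : ∀ x : ZMod p, x ≠ 0 → perX x (q :: ls) = 0 := by
          intro x hx
          set t := (((q :: ls)).map (fun q' => dotp q'.2 (e (x - q'.1)))).sum with htdef
          have hgx : g [x] = AR t := by
            show sect g x [] = _
            rw [hsw x, mixedProd_root, inlSum_secw he0]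
          have hsx : sect g x = Aa t := by
            funext v
            cases v with
            | nil => exact hgx
            | cons y w =>
              show g (x :: y :: w) = Aa t (y :: w)
              rw [Aa_cons]
              apply hdir
              · intro k i hk
                cases k with
                | zero =>
                  rw [List.replicate_zero, List.nil_append] at hk
                  exact List.cons_ne_nil _ _ (List.cons_eq_cons.mp hk).2
                | succ k' =>
                  rw [List.replicate_succ, List.cons_append] at hk
                  exact hx (List.cons_eq_cons.mp hk).1
              · intro k hk
                cases k with
                | zero => exact List.cons_ne_nil _ _ hk
                | succ k' =>
                  rw [List.replicate_succ] at hk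
                  exact hx (List.cons_eq_cons.mp hk).1
          have h1 : mixedProd e (secw e x (q :: ls) ++ [Sum.inl (-t)]) = 1 := by
            rw [mixedProd_append, ← hsw x, hsx]
            have h2 : mixedProd e [Sum.inl (-t)] = Aa (-t) := by
              rw [mixedProd_cons, mixedProd_nil, mul_one, mixedElem_inl]
            rw [h2, Aa_add, add_neg_cancel, Aa_zero]
          set w1 := secw e x (q :: ls) ++ [Sum.inl (-t)] with hw1
          have hspec := toConj_spec he0 w1
          rw [h1] at hspec
          have hJ1 : (toConj w1).2 = 0 := by
            have h2 := congrFun hspec []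
            rw [one_apply, root_mul, wordProd_root, one_mul, Aa_nil] at h2
            exact AR_eq_one h2.symm
          have hW : wordProd e (toConj w1).1 = 1 := by
            rw [hJ1, Aa_zero, mul_one] at hspec
            exact hspec.symm
          have hsum := lemmaB he0 hli (toConj w1).1.length (toConj w1).1 le_rfl hW
          rw [toConj_sum, hw1, mixedSum_append, mixedSum_secw] at hsum
          have h3 : mixedSum (p := p) (r := r) [Sum.inl (-t)] = 0 := by
            simp [mixedSum]
          rw [h3, add_zero] at hsum
          exact hsum
        -- the B-exponent at the zero spine position is m
        have hper0 : perX 0 (q :: ls) = m := by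
          have h1 : mixedProd e (secw e 0 (q :: ls) ++ [Sum.inr (-m)]) = 1 := by
            rw [mixedProd_append, ← hsw 0, hm]
            have h2 : mixedProd e [Sum.inr (-m)] = bAut e (-m) := by
              rw [mixedProd_cons, mixedProd_nil, mul_one, mixedElem_inr]
            rw [h2, bAut_add he0, add_neg_cancel, bAut_zero]
          set w1 := secw e 0 (q :: ls) ++ [Sum.inr (-m)] with hw1
          have hspec := toConj_spec he0 w1
          rw [h1] at hspec
          have hJ1 : (toConj w1).2 = 0 := by
            have h2 := congrFun hspec []
            rw [one_apply, root_mul, wordProd_root, one_mul, Aa_nil] at h2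
            exact AR_eq_one h2.symm
          have hW : wordProd e (toConj w1).1 = 1 := by
            rw [hJ1, Aa_zero, mul_one] at hspec
            exact hspec.symm
          have hsum := lemmaB he0 hli (toConj w1).1.length (toConj w1).1 le_rfl hW
          rw [toConj_sum, hw1, mixedSum_append, mixedSum_secw] at hsum
          have h3 : mixedSum (p := p) (r := r) [Sum.inr (-m)] = -m := by
            simp [mixedSum]
          rw [h3] at hsum
          exact add_neg_eq_zero.mp hsum
        -- the level-one labels agree with those of `bAut e m`
        have hts : ∀ x : ZMod p,
            (((q :: ls)).map (fun q' => dotp q'.2 (e (x - q'.1)))).sum = dotp m (e x) := by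
          intro x
          rw [sum_dotp_group]
          rw [Finset.sum_eq_single 0 (fun d _ hd => by rw [hperx d hd, dotp_zero_left])
            (fun h => absurd (Finset.mem_univ 0) h)]
          rw [hper0, sub_zero]
        refine ⟨m, ?_⟩
        funext v
        cases v with
        | nil => rw [hroot, bAut_nil]
        | cons x w =>
          by_cases hx : x = 0
          · subst hx
            show sect g 0 w = bAut e m (0 :: w)
            rw [hm, bAut_zero_cons he0]
          · cases w with
            | nil =>
              have h4 : g [x] = AR ((((q :: ls)).map
                  (fun q' => dotp q'.2 (e (x - q'.1)))).sum) := by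
                show sect g x [] = _
                rw [hsw x, mixedProd_root, inlSum_secw he0]
              rw [h4, hts x, bAut_single]
            | cons y u =>
              have h1 : g (x :: y :: u) = 1 := by
                apply hdir
                · intro k i hk
                  cases k with
                  | zero =>
                    rw [List.replicate_zero, List.nil_append] at hk
                    exact List.cons_ne_nil _ _ (List.cons_eq_cons.mp hk).2
                  | succ k' =>
                    rw [List.replicate_succ, List.cons_append] at hk
                    exact hx (List.cons_eq_cons.mp hk).1
                · intro k hk
                  cases k with
                  | zero => exact List.cons_ne_nil _ _ hk
                  | succ k' =>
                    rw [List.replicate_succ] at hk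
                    exact hx (List.cons_eq_cons.mp hk).1
              rw [h1, bAut_cons_cons, if_neg hx]

end GGSAux
/-- Let `G` be a non-constant multi-GGS group and let `g ∈ G` be directed along the ray `0̄`
(i.e. `g` stabilises every vertex `0^m`, and all labels of `g` away from the vertices adjacent
to the ray are trivial).  Then `g ∈ B`. -/
theorem directed_mem_B (p r : ℕ) [Fact p.Prime] (hp : Odd p)
    (e : ZMod p → Fin r → ZMod p) (he0 : e 0 = 0) (hnc : NonConstant e)
    (g : TreeAut p) (hg : g ∈ GGS e)
    (hfix : ∀ m : ℕ, pact g (List.replicate m (0 : ZMod p)) = List.replicate m 0)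
    (hdir : ∀ v : List (ZMod p),
      (∀ (k : ℕ) (i : ZMod p), v ≠ List.replicate k (0 : ZMod p) ++ [i]) →
      (∀ k : ℕ, v ≠ List.replicate k (0 : ZMod p)) → g v = 1) :
    ∃ n : Fin r → ZMod p, g = bAut e n := by
  haveI : NeZero p := ⟨(Fact.out : p.Prime).ne_zero⟩
  obtain ⟨l, J, hrep⟩ := GGSAux.exists_rep he0 hg
  exact GGSAux.mainT he0 hnc.2 l.length g l J le_rfl hrep
    (GGSAux.GGS_le_Saff e hg) hfix hdir
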